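/- For all natural numbers n, the double sum over integers i, j of binom(2n, n+i) * binom(2n, n+j) * |i^3 - j^3| equals (4 n^2 (5n-2) / (4n-1)) * binom(4n-1, 2n-1). -/

import Mathlib

/-- Binomial coefficient `n.choose k` extended to an integer lower index,
vanishing when `k < 0` (and, as usual, when `k > n`). -/
def ichoose (n : ℕ) (k : ℤ) : ℤ := if 0 ≤ k then (n.choose k.toNat : ℤ) else 0

lemma ichoose_ofNat (N k : ℕ) : ichoose N (k : ℤ) = (N.choose k : ℤ) := by
  simp [ichoose]

lemma ichoose_neg (N : ℕ) {k : ℤ} (h : k < 0) : ichoose N k = 0 := by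
  simp [ichoose, not_le.2 h]

lemma ichoose_gt (N : ℕ) {k : ℤ} (h : (N : ℤ) < k) : ichoose N k = 0 := by
  rcases le_or_gt 0 k with hk | hk
  · rw [ichoose, if_pos hk, Nat.choose_eq_zero_of_lt, Int.natCast_zero]
    omega
  · exact ichoose_neg N hk

-- ## Vandermonde machinery

lemma vander_shift (a b e : ℕ) (he : e ≤ b) :
    ∑ k ∈ Finset.range (b + 1), (a.choose k : ℚ) * (b.choose (k + e)) =
      ((a + b).choose (b - e) : ℚ) := by
  have h1 : ∑ k ∈ Finset.range (b - e + 1), (a.choose k : ℚ) * (b.choose (k + e)) =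
      ∑ k ∈ Finset.range (b + 1), (a.choose k : ℚ) * (b.choose (k + e)) := by
    apply Finset.sum_subset (Finset.range_subset_range.2 (by omega))
    intro x hx hx'
    simp only [Finset.mem_range] at hx hx'
    rw [Nat.choose_eq_zero_of_lt (show b < x + e by omega), Nat.cast_zero, mul_zero]
  rw [← h1]
  have h2 : ∀ k ∈ Finset.range (b - e + 1), (a.choose k : ℚ) * (b.choose (k + e)) =
      (a.choose k : ℚ) * (b.choose ((b - e) - k)) := by
    intro k hk
    simp only [Finset.mem_range] at hk
    have hkb : k + e ≤ b := by omega
    rw [← Nat.choose_symm hkb]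
    have : b - (k + e) = b - e - k := by omega
    rw [this]
  rw [Finset.sum_congr rfl h2]
  rw [Nat.add_choose_eq, Finset.Nat.sum_antidiagonal_eq_sum_range_succ_mk, Nat.cast_sum]
  push_cast
  rfl

-- absorption identity in ℚ
lemma absorb (a k : ℕ) : ((k + 1 : ℕ) : ℚ) * ((a + 1).choose (k + 1) : ℚ) =
    ((a + 1 : ℕ) : ℚ) * (a.choose k : ℚ) := by
  have h := Nat.add_one_mul_choose_eq a k
  have := congrArg (Nat.cast : ℕ → ℚ) h
  push_cast at this ⊢
  linarith [this]

lemma sum_ext_choose (a b e N M : ℕ) (hNM : N ≤ M) (hb : ∀ k, N ≤ k → b < k + e ∨ a < k) :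
    ∑ k ∈ Finset.range N, (a.choose k : ℚ) * (b.choose (k + e)) =
    ∑ k ∈ Finset.range M, (a.choose k : ℚ) * (b.choose (k + e)) := by
  apply Finset.sum_subset (Finset.range_subset_range.2 hNM)
  intro x hx hx'
  simp only [Finset.mem_range] at hx hx'
  rcases hb x (by omega) with h | h
  · rw [Nat.choose_eq_zero_of_lt h, Nat.cast_zero, mul_zero]
  · rw [Nat.choose_eq_zero_of_lt h, Nat.cast_zero, zero_mul]

lemma vander_main (a b e : ℕ) (N : ℕ) (hN : b - e + 1 ≤ N) :
    ∑ k ∈ Finset.range N, (a.choose k : ℚ) * (b.choose (k + e)) =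
      (ichoose (a + b) ((b : ℤ) - e) : ℚ) := by
  rcases le_or_gt e b with he | he
  · have h1 : ∑ k ∈ Finset.range N, (a.choose k : ℚ) * (b.choose (k + e)) =
        ∑ k ∈ Finset.range (b + 1), (a.choose k : ℚ) * (b.choose (k + e)) := by
      rcases le_or_gt N (b + 1) with h | h
      · exact sum_ext_choose a b e N (b + 1) h (fun k hk => by left; omega) |>.symm ▸
          sum_ext_choose a b e N (b + 1) h (fun k hk => by left; omega)
      · exact (sum_ext_choose a b e (b + 1) N (by omega) (fun k hk => by left; omega)).symm
    rw [h1, vander_shift a b e he]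
    have h : (b : ℤ) - e = ((b - e : ℕ) : ℤ) := by push_cast [he]; ring
    rw [h, ichoose_ofNat]
    norm_cast
  · have h1 : ∀ k ∈ Finset.range N, (a.choose k : ℚ) * (b.choose (k + e)) = 0 := by
      intro k _
      rw [Nat.choose_eq_zero_of_lt (show b < k + e by omega), Nat.cast_zero, mul_zero]
    rw [Finset.sum_congr rfl h1, Finset.sum_const_zero,
      ichoose_neg _ (show (b : ℤ) - e < 0 by omega), Int.cast_zero]

lemma V1 (m e : ℕ) :
    ∑ k ∈ Finset.range (2 * m + 2 + 1),
        (k : ℚ) * ((2 * m + 2).choose k : ℚ) * ((2 * m + 2).choose (k + e)) =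
      ((2 * m + 2 : ℕ) : ℚ) * (ichoose (4 * m + 3) ((2 * m + 2 : ℤ) - e - 1) : ℚ) := by
  rw [Finset.sum_range_succ']
  simp only [Nat.cast_zero, zero_mul, add_zero]
  have hterm : ∀ k ∈ Finset.range (2 * m + 2),
      ((k + 1 : ℕ) : ℚ) * ((2 * m + 2).choose (k + 1) : ℚ) * ((2 * m + 2).choose (k + 1 + e)) =
      ((2 * m + 2 : ℕ) : ℚ) * (((2 * m + 1).choose k : ℚ) * ((2 * m + 2).choose (k + (e + 1)))) := by
    intro k _
    have h := absorb (2 * m + 1) k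
    have harg : k + 1 + e = k + (e + 1) := by omega
    rw [harg]
    push_cast at h ⊢
    nlinarith [h]
  rw [Finset.sum_congr rfl hterm, ← Finset.mul_sum,
    vander_main (2 * m + 1) (2 * m + 2) (e + 1) (2 * m + 2) (by omega)]
  norm_num
  left
  congr 1
  · omega
  · ring

lemma V2 (m e : ℕ) :
    ∑ k ∈ Finset.range (2 * m + 2 + 1),
        (k : ℚ) * ((k : ℚ) - 1) * ((2 * m + 2).choose k : ℚ) * ((2 * m + 2).choose (k + e)) =
      ((2 * m + 2 : ℕ) : ℚ) * ((2 * m + 1 : ℕ) : ℚ)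
        * (ichoose (4 * m + 2) ((2 * m + 2 : ℤ) - e - 2) : ℚ) := by
  rw [Finset.sum_range_succ']
  rw [Finset.sum_range_succ']
  have hterm : ∀ k ∈ Finset.range (2 * m + 1),
      ((k + 1 + 1 : ℕ) : ℚ) * (((k + 1 + 1 : ℕ) : ℚ) - 1) * ((2 * m + 2).choose (k + 1 + 1) : ℚ)
          * ((2 * m + 2).choose (k + 1 + 1 + e)) =
      ((2 * m + 2 : ℕ) : ℚ) * ((2 * m + 1 : ℕ) : ℚ)
        * (((2 * m).choose k : ℚ) * ((2 * m + 2).choose (k + (e + 2)))) := by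
    intro k _
    have h1 := absorb (2 * m + 1) (k + 1)
    have h2 := absorb (2 * m) k
    have e1 : 2 * m + 1 + 1 = 2 * m + 2 := by omega
    rw [e1] at h1
    have harg : k + 1 + 1 + e = k + (e + 2) := by omega
    rw [harg]
    push_cast at h1 h2 ⊢
    linear_combination ((k : ℚ) + 1) * (((2 * m + 2).choose (k + (e + 2)) : ℕ) : ℚ) * h1
      + (2 * (m : ℚ) + 2) * (((2 * m + 2).choose (k + (e + 2)) : ℕ) : ℚ) * h2
  rw [Finset.sum_congr rfl hterm, ← Finset.mul_sum,
    vander_main (2 * m) (2 * m + 2) (e + 2) (2 * m + 1) (by omega)]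
  have hi : ichoose (2 * m + (2 * m + 2)) ((2 * m + 2 : ℤ) - (e + 2)) =
      ichoose (4 * m + 2) ((2 * m + 2 : ℤ) - e - 2) := by
    congr 1
    · omega
    · ring
  push_cast [hi]
  ring

-- ## the inner sum and its closed form

noncomputable def innerSum (m e : ℕ) : ℚ :=
  ∑ k ∈ Finset.range (2 * m + 2 + 1),
    ((2 * m + 2).choose k : ℚ) * ((2 * m + 2).choose (k + e))
      * (((k : ℚ) + (e : ℚ) - ((m : ℚ) + 1)) ^ 3 - ((k : ℚ) - ((m : ℚ) + 1)) ^ 3)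

lemma Esum (m e : ℕ) :
    innerSum m e =
      3 * e * (((2 * m + 2 : ℕ) : ℚ) * ((2 * m + 1 : ℕ) : ℚ))
          * (ichoose (4 * m + 2) ((2 * m + 2 : ℤ) - e - 2) : ℚ)
        + (3 * e + 3 * (e : ℚ) ^ 2 - 6 * (m + 1) * e) * ((2 * m + 2 : ℕ) : ℚ)
          * (ichoose (4 * m + 3) ((2 * m + 2 : ℤ) - e - 1) : ℚ)
        + (3 * e * ((m : ℚ) + 1) ^ 2 - 3 * (e : ℚ) ^ 2 * (m + 1) + (e : ℚ) ^ 3)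
          * (ichoose (4 * m + 4) ((2 * m + 2 : ℤ) - e) : ℚ) := by
  rw [innerSum]
  have hw : ∀ k ∈ Finset.range (2 * m + 2 + 1),
      ((2 * m + 2).choose k : ℚ) * ((2 * m + 2).choose (k + e))
          * (((k : ℚ) + (e : ℚ) - ((m : ℚ) + 1)) ^ 3 - ((k : ℚ) - ((m : ℚ) + 1)) ^ 3) =
      3 * e * ((k : ℚ) * ((k : ℚ) - 1) * ((2 * m + 2).choose k : ℚ) * ((2 * m + 2).choose (k + e)))
        + (3 * e + 3 * (e : ℚ) ^ 2 - 6 * (m + 1) * e)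
            * ((k : ℚ) * ((2 * m + 2).choose k : ℚ) * ((2 * m + 2).choose (k + e)))
        + (3 * e * ((m : ℚ) + 1) ^ 2 - 3 * (e : ℚ) ^ 2 * (m + 1) + (e : ℚ) ^ 3)
            * (((2 * m + 2).choose k : ℚ) * ((2 * m + 2).choose (k + e))) := by
    intro k _
    ring
  rw [Finset.sum_congr rfl hw]
  rw [Finset.sum_add_distrib, Finset.sum_add_distrib, ← Finset.mul_sum, ← Finset.mul_sum,
    ← Finset.mul_sum, V1, V2, vander_main (2 * m + 2) (2 * m + 2) e (2 * m + 2 + 1) (by omega)]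
  have h1 : 2 * m + 2 + (2 * m + 2) = 4 * m + 4 := by omega
  have h2 : ((2 * m + 2 : ℕ) : ℤ) - e = (2 * m + 2 : ℤ) - e := by push_cast; ring
  rw [h1, h2]
  ring

-- ## the Gosper certificate

/-- the Gosper certificate polynomial (here n = m+1) -/
noncomputable def pq (m : ℕ) (d : ℚ) : ℚ :=
  ((m : ℚ) * d ^ 3 + (2 * m + 1) * (m : ℚ) * d ^ 2 + 3 * ((m : ℚ) + 1) ^ 2 * d
    + 2 * ((m : ℚ) + 1) ^ 2 * (5 * m + 3)) / (2 * (4 * m + 3))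

lemma cert (m e : ℕ) (he1 : 1 ≤ e) (he2 : e ≤ 2 * m + 2) :
    3 * e * (((2 * m + 2 : ℕ) : ℚ) * ((2 * m + 1 : ℕ) : ℚ))
          * (ichoose (4 * m + 2) ((2 * m + 2 : ℤ) - e - 2) : ℚ)
        + (3 * e + 3 * (e : ℚ) ^ 2 - 6 * (m + 1) * e) * ((2 * m + 2 : ℕ) : ℚ)
          * (ichoose (4 * m + 3) ((2 * m + 2 : ℤ) - e - 1) : ℚ)
        + (3 * e * ((m : ℚ) + 1) ^ 2 - 3 * (e : ℚ) ^ 2 * (m + 1) + (e : ℚ) ^ 3)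
          * (ichoose (4 * m + 4) ((2 * m + 2 : ℤ) - e) : ℚ)
      = pq m e * (ichoose (4 * m + 4) ((2 * m + 2 : ℤ) - e) : ℚ)
        - pq m (e + 1) * (ichoose (4 * m + 4) ((2 * m + 2 : ℤ) - (e + 1)) : ℚ) := by
  have hden : (2 * (4 * (m : ℚ) + 3)) ≠ 0 := by positivity
  rcases lt_trichotomy e (2 * m + 1) with hA | hB | hC
  · -- generic case: e ≤ 2m, set M := 2m - e
    obtain ⟨M, hMe, hMle⟩ : ∃ M : ℕ, e = 2 * m - M ∧ M ≤ 2 * m := ⟨2 * m - e, by omega, by omega⟩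
    have a2 : (2 * m + 2 : ℤ) - e - 2 = ((M : ℕ) : ℤ) := by omega
    have a1 : (2 * m + 2 : ℤ) - e - 1 = ((M + 1 : ℕ) : ℤ) := by push_cast; omega
    have a0 : (2 * m + 2 : ℤ) - e = ((M + 2 : ℕ) : ℤ) := by push_cast; omega
    have ay : (2 * m + 2 : ℤ) - (e + 1) = ((M + 1 : ℕ) : ℤ) := by push_cast; omega
    rw [a2, a1, a0, ay]
    simp only [ichoose_ofNat]
    push_cast
    have hecast : (e : ℚ) = 2 * (m : ℚ) - M := by
      have : (e : ℤ) = 2 * (m : ℤ) - M := by omega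
      exact_mod_cast congrArg (Int.cast : ℤ → ℚ) this
    rw [hecast]
    set x2 : ℚ := (((4 * m + 2).choose M : ℕ) : ℚ) with hx2
    set x1 : ℚ := (((4 * m + 3).choose (M + 1) : ℕ) : ℚ) with hx1
    set x0 : ℚ := (((4 * m + 4).choose (M + 2) : ℕ) : ℚ) with hx0
    set y : ℚ := (((4 * m + 4).choose (M + 1) : ℕ) : ℚ) with hy
    have r1 : ((M : ℚ) + 1) * x1 = (4 * (m : ℚ) + 3) * x2 := by
      have h := absorb (4 * m + 2) M
      rw [show 4 * m + 2 + 1 = 4 * m + 3 from by omega] at h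
      rw [hx1, hx2]; push_cast at h ⊢; linarith
    have r2 : ((M : ℚ) + 2) * x0 = (4 * (m : ℚ) + 4) * x1 := by
      have h := absorb (4 * m + 3) (M + 1)
      rw [show 4 * m + 3 + 1 = 4 * m + 4 from by omega,
        show M + 1 + 1 = M + 2 from by omega] at h
      rw [hx0, hx1]; push_cast at h ⊢; linarith
    have r3 : ((M : ℚ) + 2) * x0 = (4 * (m : ℚ) + 3 - M) * y := by
      have h := Nat.choose_succ_right_eq (4 * m + 4) (M + 1)
      rw [show M + 1 + 1 = M + 2 from by omega,
        show 4 * m + 4 - (M + 1) = 4 * m + 3 - M from by omega] at h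
      have h2 := congrArg (Nat.cast : ℕ → ℚ) h
      rw [hx0, hy]
      push_cast [show M ≤ 4 * m + 3 from by omega] at h2
      linarith
    have hM1 : ((M : ℚ) + 1) ≠ 0 := by positivity
    have hM2 : ((M : ℚ) + 2) ≠ 0 := by positivity
    have hM3 : (4 * (m : ℚ) + 3 - M) ≠ 0 := by
      have : (M : ℚ) ≤ 2 * m := by exact_mod_cast hMle
      intro h; nlinarith
    have ey : y = ((M : ℚ) + 2) * x0 / (4 * (m : ℚ) + 3 - M) := by
      field_simp; linarith [r3]
    have e0 : x0 = (4 * (m : ℚ) + 4) * x1 / ((M : ℚ) + 2) := by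
      field_simp; linarith [r2]
    have e1 : x1 = (4 * (m : ℚ) + 3) * x2 / ((M : ℚ) + 1) := by
      field_simp; linarith [r1]
    rw [ey, e0, e1]
    simp only [pq]
    have hM3' : (m : ℚ) * 4 + 3 - M ≠ 0 := by rw [mul_comm]; exact hM3
    field_simp
    ring
  · -- e = 2m+1
    have hecast : (e : ℚ) = 2 * (m : ℚ) + 1 := by rw [hB]; push_cast; ring
    have i2 : ichoose (4 * m + 2) ((2 * m + 2 : ℤ) - e - 2) = 0 :=
      ichoose_neg _ (by omega)
    have i1 : ichoose (4 * m + 3) ((2 * m + 2 : ℤ) - e - 1) = ((4 * m + 3).choose 0 : ℤ) := by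
      rw [show (2 * m + 2 : ℤ) - e - 1 = ((0 : ℕ) : ℤ) from by omega, ichoose_ofNat]
    have i0 : ichoose (4 * m + 4) ((2 * m + 2 : ℤ) - e) = ((4 * m + 4).choose 1 : ℤ) := by
      rw [show (2 * m + 2 : ℤ) - e = ((1 : ℕ) : ℤ) from by omega, ichoose_ofNat]
    have iy : ichoose (4 * m + 4) ((2 * m + 2 : ℤ) - (e + 1)) = ((4 * m + 4).choose 0 : ℤ) := by
      rw [show (2 * m + 2 : ℤ) - (e + 1) = ((0 : ℕ) : ℤ) from by omega, ichoose_ofNat]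
    rw [i2, i1, i0, iy, Nat.choose_zero_right, Nat.choose_one_right, Nat.choose_zero_right,
      hecast]
    simp only [pq]
    push_cast
    field_simp
    ring
  · -- e = 2m+2
    have hB : e = 2 * m + 2 := by omega
    have hecast : (e : ℚ) = 2 * (m : ℚ) + 2 := by rw [hB]; push_cast; ring
    have i2 : ichoose (4 * m + 2) ((2 * m + 2 : ℤ) - e - 2) = 0 :=
      ichoose_neg _ (by omega)
    have i1 : ichoose (4 * m + 3) ((2 * m + 2 : ℤ) - e - 1) = 0 :=
      ichoose_neg _ (by omega)
    have i0 : ichoose (4 * m + 4) ((2 * m + 2 : ℤ) - e) = ((4 * m + 4).choose 0 : ℤ) := by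
      rw [show (2 * m + 2 : ℤ) - e = ((0 : ℕ) : ℤ) from by omega, ichoose_ofNat]
    have iy : ichoose (4 * m + 4) ((2 * m + 2 : ℤ) - (e + 1)) = 0 :=
      ichoose_neg _ (by omega)
    rw [i2, i1, i0, iy, Nat.choose_zero_right, hecast]
    simp only [pq]
    push_cast
    field_simp
    ring

-- ## telescoping

noncomputable def sfun (m d : ℕ) : ℚ :=
  pq m (d : ℚ) * (ichoose (4 * m + 4) ((2 * m + 2 : ℤ) - (d : ℤ)) : ℚ)

lemma inner_step (m e : ℕ) (he1 : 1 ≤ e) (he2 : e ≤ 2 * m + 2) :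
    innerSum m e = sfun m e - sfun m (e + 1) := by
  rw [Esum, cert m e he1 he2, sfun, sfun]
  push_cast
  ring

lemma tele (m : ℕ) :
    ∑ d ∈ Finset.range (2 * m + 2), innerSum m (d + 1) = sfun m 1 := by
  have h : ∀ d ∈ Finset.range (2 * m + 2),
      innerSum m (d + 1) = sfun m (d + 1) - sfun m (d + 1 + 1) := by
    intro d hd
    simp only [Finset.mem_range] at hd
    exact inner_step m (d + 1) (by omega) (by omega)
  rw [Finset.sum_congr rfl h, Finset.sum_range_sub' (f := fun d => sfun m (d + 1))]
  have hz : sfun m (2 * m + 2 + 1) = 0 := by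
    rw [sfun, ichoose_neg _ (by push_cast; omega), Int.cast_zero, mul_zero]
  rw [hz, sub_zero]

-- ## support and abs lemmas

lemma ichoose_support {m : ℕ} {j : ℤ} (h : ichoose (2 * m + 2) ((m : ℤ) + 1 + j) ≠ 0) :
    j ∈ Finset.Icc (-((m : ℤ) + 1)) ((m : ℤ) + 1) := by
  rw [Finset.mem_Icc]
  by_contra hc
  push_neg at hc
  rcases le_or_gt (-((m : ℤ) + 1)) j with h1 | h1
  · exact h (ichoose_gt _ (by push_cast; omega))
  · exact h (ichoose_neg _ (by omega))

lemma abs_cube_split (i j : ℤ) :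
    |(i : ℚ) ^ 3 - (j : ℚ) ^ 3| =
      (if j < i then (i : ℚ) ^ 3 - (j : ℚ) ^ 3 else 0)
        + (if i < j then (j : ℚ) ^ 3 - (i : ℚ) ^ 3 else 0) := by
  have hodd : Odd 3 := ⟨1, by norm_num⟩
  rcases lt_trichotomy i j with h | h | h
  · have hq : (i : ℚ) < (j : ℚ) := by exact_mod_cast h
    have h3 : (i : ℚ) ^ 3 < (j : ℚ) ^ 3 := hodd.strictMono_pow hq
    rw [if_neg (by omega), if_pos h, abs_of_neg (by linarith)]
    ring
  · subst h
    simp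
  · have hq : (j : ℚ) < (i : ℚ) := by exact_mod_cast h
    have h3 : (j : ℚ) ^ 3 < (i : ℚ) ^ 3 := hodd.strictMono_pow hq
    rw [if_pos h, if_neg (by omega), abs_of_pos (by linarith)]
    ring

-- ## reorganization of the double sum

lemma reorg (m : ℕ) :
    (∑ i ∈ Finset.Icc (-((m : ℤ) + 1)) ((m : ℤ) + 1),
      ∑ j ∈ Finset.Icc (-((m : ℤ) + 1)) ((m : ℤ) + 1),
        (ichoose (2 * m + 2) ((m : ℤ) + 1 + i) : ℚ)
          * (ichoose (2 * m + 2) ((m : ℤ) + 1 + j) : ℚ) * |(i : ℚ) ^ 3 - (j : ℚ) ^ 3|)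
    = 2 * ∑ d ∈ Finset.range (2 * m + 2), innerSum m (d + 1) := by
  classical
  set s : Finset ℤ := Finset.Icc (-((m : ℤ) + 1)) ((m : ℤ) + 1) with hs
  set c : ℤ → ℚ := fun i => (ichoose (2 * m + 2) ((m : ℤ) + 1 + i) : ℚ) with hc
  have step1 : (∑ i ∈ s, ∑ j ∈ s, c i * c j * |(i : ℚ) ^ 3 - (j : ℚ) ^ 3|)
      = (∑ i ∈ s, ∑ j ∈ s, c i * c j * (if j < i then (i : ℚ) ^ 3 - (j : ℚ) ^ 3 else 0))
        + (∑ i ∈ s, ∑ j ∈ s, c i * c j * (if i < j then (j : ℚ) ^ 3 - (i : ℚ) ^ 3 else 0)) := by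
    rw [← Finset.sum_add_distrib]
    apply Finset.sum_congr rfl
    intro i _
    rw [← Finset.sum_add_distrib]
    apply Finset.sum_congr rfl
    intro j _
    rw [abs_cube_split]
    ring
  have step2 : (∑ i ∈ s, ∑ j ∈ s, c i * c j * (if i < j then (j : ℚ) ^ 3 - (i : ℚ) ^ 3 else 0))
      = (∑ i ∈ s, ∑ j ∈ s, c i * c j * (if j < i then (i : ℚ) ^ 3 - (j : ℚ) ^ 3 else 0)) := by
    rw [Finset.sum_comm]
    apply Finset.sum_congr rfl
    intro i _
    apply Finset.sum_congr rfl
    intro j _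
    ring
  rw [step1, step2, ← two_mul]
  congr 1
  have step3 : (∑ i ∈ s, ∑ j ∈ s, c i * c j * (if j < i then (i : ℚ) ^ 3 - (j : ℚ) ^ 3 else 0))
      = ∑ p ∈ (s ×ˢ s).filter (fun p : ℤ × ℤ => p.2 < p.1),
          c p.1 * c p.2 * ((p.1 : ℚ) ^ 3 - (p.2 : ℚ) ^ 3) := by
    rw [Finset.sum_filter, ← Finset.sum_product']
    apply Finset.sum_congr rfl
    intro p _
    rcases lt_or_ge p.2 p.1 with h | h
    · rw [if_pos h, if_pos h]
    · rw [if_neg (not_lt.2 h), if_neg (not_lt.2 h), mul_zero]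
  rw [step3]
  have step4 : (∑ d ∈ Finset.range (2 * m + 2), innerSum m (d + 1))
      = ∑ q ∈ ((Finset.range (2 * m + 2)) ×ˢ (Finset.range (2 * m + 2 + 1))).filter
            (fun q : ℕ × ℕ => q.1 + 1 + q.2 ≤ 2 * m + 2),
          ((2 * m + 2).choose q.2 : ℚ) * ((2 * m + 2).choose (q.2 + (q.1 + 1)))
            * (((q.2 : ℚ) + ((q.1 + 1 : ℕ) : ℚ) - ((m : ℚ) + 1)) ^ 3
              - ((q.2 : ℚ) - ((m : ℚ) + 1)) ^ 3) := by
    rw [Finset.sum_filter, Finset.sum_product]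
    simp only [innerSum]
    apply Finset.sum_congr rfl
    intro d _
    apply Finset.sum_congr rfl
    intro k _
    rcases le_or_gt (d + 1 + k) (2 * m + 2) with h | h
    · rw [if_pos h]
    · rw [if_neg (not_le.2 h), Nat.choose_eq_zero_of_lt (show 2 * m + 2 < k + (d + 1) by omega),
        Nat.cast_zero, mul_zero, zero_mul]
  rw [step4]
  apply Finset.sum_nbij'
    (i := fun p : ℤ × ℤ => (((p.1 - p.2).toNat - 1, (p.2 + (m + 1)).toNat) : ℕ × ℕ))
    (j := fun q : ℕ × ℕ =>
      (((q.2 : ℤ) + (q.1 : ℤ) + 1 - ((m : ℤ) + 1), (q.2 : ℤ) - ((m : ℤ) + 1)) : ℤ × ℤ))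
  · intro p hp
    simp only [hs, Finset.mem_filter, Finset.mem_product, Finset.mem_Icc, Finset.mem_range] at hp ⊢
    omega
  · intro q hq
    simp only [hs, Finset.mem_filter, Finset.mem_product, Finset.mem_Icc, Finset.mem_range] at hq ⊢
    omega
  · intro p hp
    simp only [hs, Finset.mem_filter, Finset.mem_product, Finset.mem_Icc] at hp
    have h1 : ((p.2 + ((m : ℤ) + 1)).toNat : ℤ) + (((p.1 - p.2).toNat - 1 : ℕ) : ℤ) + 1
        - ((m : ℤ) + 1) = p.1 := by omega
    have h2 : ((p.2 + ((m : ℤ) + 1)).toNat : ℤ) - ((m : ℤ) + 1) = p.2 := by omega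
    exact Prod.ext h1 h2
  · intro q hq
    simp only [hs, Finset.mem_filter, Finset.mem_product, Finset.mem_range] at hq
    have h1 : (((q.2 : ℤ) + (q.1 : ℤ) + 1 - ((m : ℤ) + 1)) - ((q.2 : ℤ) - ((m : ℤ) + 1))).toNat - 1
        = q.1 := by omega
    have h2 : (((q.2 : ℤ) - ((m : ℤ) + 1)) + ((m : ℤ) + 1)).toNat = q.2 := by omega
    exact Prod.ext h1 h2
  · intro p hp
    simp only [hs, Finset.mem_filter, Finset.mem_product, Finset.mem_Icc] at hp
    obtain ⟨⟨⟨h1, h2⟩, h3, h4⟩, h5⟩ := hp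
    set k : ℕ := (p.2 + (m + 1)).toNat with hk
    set d : ℕ := (p.1 - p.2).toNat - 1 with hd
    have hkz : (k : ℤ) = p.2 + (m + 1) := by omega
    have hdz : (d : ℤ) = p.1 - p.2 - 1 := by omega
    have ha1 : (m : ℤ) + 1 + p.1 = ((k + (d + 1) : ℕ) : ℤ) := by push_cast; omega
    have ha2 : (m : ℤ) + 1 + p.2 = ((k : ℕ) : ℤ) := by omega
    have hb1 : (p.1 : ℚ) = (k : ℚ) + ((d + 1 : ℕ) : ℚ) - ((m : ℚ) + 1) := by
      have : (p.1 : ℤ) = (k : ℤ) + ((d + 1 : ℕ) : ℤ) - ((m : ℤ) + 1) := by push_cast; omega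
      exact_mod_cast congrArg (Int.cast : ℤ → ℚ) this
    have hb2 : (p.2 : ℚ) = (k : ℚ) - ((m : ℚ) + 1) := by
      have : (p.2 : ℤ) = (k : ℤ) - ((m : ℤ) + 1) := by omega
      exact_mod_cast congrArg (Int.cast : ℤ → ℚ) this
    simp only [hc]
    rw [ha1, ha2, ichoose_ofNat, ichoose_ofNat, hb1, hb2]
    push_cast
    ring

-- ## final algebra

lemma final_rel (m : ℕ) :
    (2 * (m : ℚ) + 3) * ((4 * m + 4).choose (2 * m + 1) : ℚ)
      = (4 * (m : ℚ) + 4) * ((4 * m + 3).choose (2 * m + 1) : ℚ) := by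
  have h1 := Nat.add_one_mul_choose_eq (4 * m + 3) (2 * m + 1)
  rw [show 4 * m + 3 + 1 = 4 * m + 4 from by omega,
    show 2 * m + 1 + 1 = 2 * m + 2 from by omega] at h1
  have h2 := Nat.choose_succ_right_eq (4 * m + 4) (2 * m + 1)
  rw [show 2 * m + 1 + 1 = 2 * m + 2 from by omega,
    show 4 * m + 4 - (2 * m + 1) = 2 * m + 3 from by omega] at h2
  have c1 := congrArg (Nat.cast : ℕ → ℚ) h1
  have c2 := congrArg (Nat.cast : ℕ → ℚ) h2
  push_cast at c1 c2
  nlinarith [c1, c2]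

theorem stmt15 (n : ℕ) :
    ∑ᶠ i : ℤ, ∑ᶠ j : ℤ,
        ((ichoose (2 * n) (n + i) : ℚ) * (ichoose (2 * n) (n + j) : ℚ)
          * |(i : ℚ) ^ 3 - (j : ℚ) ^ 3|)
      = 4 * (n : ℚ) ^ 2 * (5 * n - 2) / (4 * n - 1)
          * ((4 * n - 1).choose (2 * n - 1) : ℚ) := by
  rcases n with _ | m
  · -- n = 0
    have hz : ∀ i j : ℤ,
        ((ichoose (2 * 0) ((0 : ℕ) + i) : ℚ) * (ichoose (2 * 0) ((0 : ℕ) + j) : ℚ)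
          * |(i : ℚ) ^ 3 - (j : ℚ) ^ 3|) = 0 := by
      intro i j
      rcases eq_or_ne i 0 with hi | hi
      · rcases eq_or_ne j 0 with hj | hj
        · subst hi; subst hj; norm_num
        · have hj0 : ichoose (2 * 0) ((0 : ℕ) + j) = 0 := by
            rcases lt_or_gt_of_ne hj with h | h
            · exact ichoose_neg _ (by omega)
            · exact ichoose_gt _ (by push_cast; omega)
          rw [hj0, Int.cast_zero, mul_zero, zero_mul]
      · have hi0 : ichoose (2 * 0) ((0 : ℕ) + i) = 0 := by
          rcases lt_or_gt_of_ne hi with h | h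
          · exact ichoose_neg _ (by omega)
          · exact ichoose_gt _ (by push_cast; omega)
        rw [hi0, Int.cast_zero, zero_mul, zero_mul]
    have h1 : ∀ i : ℤ, ∑ᶠ j : ℤ,
        ((ichoose (2 * 0) ((0 : ℕ) + i) : ℚ) * (ichoose (2 * 0) ((0 : ℕ) + j) : ℚ)
          * |(i : ℚ) ^ 3 - (j : ℚ) ^ 3|) = 0 := by
      intro i
      rw [finsum_congr (hz i), finsum_zero]
    rw [finsum_congr h1, finsum_zero]
    norm_num
  · -- n = m + 1
    have e2 : 2 * (m + 1) = 2 * m + 2 := by ring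
    have e4 : 4 * (m + 1) - 1 = 4 * m + 3 := by omega
    have e21 : 2 * (m + 1) - 1 = 2 * m + 1 := by omega
    simp only [e2, e4, e21]
    push_cast
    have hout : ∀ i : ℤ, i ∉ Finset.Icc (-((m : ℤ) + 1)) ((m : ℤ) + 1) →
        ichoose (2 * m + 2) ((m : ℤ) + 1 + i) = 0 := by
      intro i hi
      rw [Finset.mem_Icc] at hi
      push_neg at hi
      rcases le_or_gt (-((m : ℤ) + 1)) i with h1 | h1
      · exact ichoose_gt _ (by push_cast; omega)
      · exact ichoose_neg _ (by omega)
    have hinner : ∀ i : ℤ,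
        (∑ᶠ j : ℤ, ((ichoose (2 * m + 2) ((m : ℤ) + 1 + i) : ℚ)
            * (ichoose (2 * m + 2) ((m : ℤ) + 1 + j) : ℚ) * |(i : ℚ) ^ 3 - (j : ℚ) ^ 3|))
        = ∑ j ∈ Finset.Icc (-((m : ℤ) + 1)) ((m : ℤ) + 1),
            ((ichoose (2 * m + 2) ((m : ℤ) + 1 + i) : ℚ)
              * (ichoose (2 * m + 2) ((m : ℤ) + 1 + j) : ℚ) * |(i : ℚ) ^ 3 - (j : ℚ) ^ 3|) := by
      intro i
      apply finsum_eq_sum_of_support_subset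
      intro j hj
      simp only [Function.mem_support] at hj
      have hne : ichoose (2 * m + 2) ((m : ℤ) + 1 + j) ≠ 0 := by
        intro h0
        exact hj (by rw [h0, Int.cast_zero, mul_zero, zero_mul])
      exact_mod_cast ichoose_support hne
    rw [finsum_congr hinner]
    rw [finsum_eq_sum_of_support_subset _
      (s := Finset.Icc (-((m : ℤ) + 1)) ((m : ℤ) + 1)) ?hsupp]
    case hsupp =>
      intro i hi
      simp only [Function.mem_support] at hi
      by_contra hmem
      apply hi
      apply Finset.sum_eq_zero
      intro j _
      rw [hout i (by exact_mod_cast hmem), Int.cast_zero, zero_mul, zero_mul]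
    rw [reorg m, tele m]
    have hone : sfun m 1 = pq m 1 * (((4 * m + 4).choose (2 * m + 1) : ℕ) : ℚ) := by
      rw [sfun, show (2 * m + 2 : ℤ) - ((1 : ℕ) : ℤ) = ((2 * m + 1 : ℕ) : ℤ) from by push_cast; ring,
        ichoose_ofNat]
      push_cast
      ring
    rw [hone]
    have hpos3 : (2 * (m : ℚ) + 3) ≠ 0 := by positivity
    have hpos4 : (4 * (m : ℚ) + 3) ≠ 0 := by positivity
    have hC : (((4 * m + 4).choose (2 * m + 1) : ℕ) : ℚ)
        = (4 * (m : ℚ) + 4) * (((4 * m + 3).choose (2 * m + 1) : ℕ) : ℚ) / (2 * (m : ℚ) + 3) := by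
      rw [eq_div_iff hpos3]
      linarith [final_rel m]
    rw [hC]
    simp only [pq]
    have hden2 : (4 * ((m : ℚ) + 1) - 1) ≠ 0 := by
      intro h; nlinarith
    have hden2' : ((m : ℚ) + 1) * 4 - 1 ≠ 0 := by rw [mul_comm]; exact hden2
    field_simp
    ring
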